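/- arXiv:2101.00244 — 4 statements merged into one kernel-verified Lean document; each statement's English description precedes it below -/
import Mathlib

section
/- Let X and Y be sets and E ⊆ X × Y. If E has the 3-of-4 property, then there exist families (A_i)_{i ∈ I} of pairwise disjoint subsets of X and (B_i)_{i ∈ I} of pairwise disjoint subsets of Y such that E = ⋃_{i ∈ I} A_i × B_i. -/
universe u v

theorem stmt2 {X : Type u} {Y : Type v} (E : Set (X × Y))
    (h34 : ∀ (x₁ x₂ : X) (y₁ y₂ : Y), x₁ ≠ x₂ → y₁ ≠ y₂ →
      (((x₁, y₁) ∈ E ∧ (x₁, y₂) ∈ E ∧ (x₂, y₂) ∈ E) → (x₂, y₁) ∈ E) ∧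
      (((x₁, y₁) ∈ E ∧ (x₁, y₂) ∈ E ∧ (x₂, y₁) ∈ E) → (x₂, y₂) ∈ E) ∧
      (((x₁, y₁) ∈ E ∧ (x₂, y₁) ∈ E ∧ (x₂, y₂) ∈ E) → (x₁, y₂) ∈ E) ∧
      (((x₁, y₂) ∈ E ∧ (x₂, y₁) ∈ E ∧ (x₂, y₂) ∈ E) → (x₁, y₁) ∈ E)) :
    ∃ (I : Type (max u v)) (A : I → Set X) (B : I → Set Y),
      Pairwise (Function.onFun Disjoint A) ∧ Pairwise (Function.onFun Disjoint B) ∧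
      E = ⋃ i, A i ×ˢ B i := by
  classical
  set S : X → Set Y := fun x => {y | (x, y) ∈ E} with hS
  -- if two slices share a point, they are equal
  have key : ∀ x₁ x₂ y, (x₁, y) ∈ E → (x₂, y) ∈ E → S x₁ = S x₂ := by
    intro x₁ x₂ y h1 h2
    rcases eq_or_ne x₁ x₂ with rfl | hx
    · rfl
    ext y'
    rcases eq_or_ne y' y with rfl | hy
    · simp [hS, h1, h2]
    constructor
    · intro h'
      exact (h34 x₁ x₂ y y' hx (Ne.symm hy)).2.1 ⟨h1, h', h2⟩
    · intro h'
      exact (h34 x₁ x₂ y y' hx (Ne.symm hy)).2.2.1 ⟨h1, h2, h'⟩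
  refine ⟨ULift.{u} (Set Y),
    fun s => {x | S x = s.down ∧ s.down.Nonempty},
    fun s => if ∃ x, S x = s.down ∧ s.down.Nonempty then s.down else ∅, ?_, ?_, ?_⟩
  · intro s t hst
    refine Set.disjoint_left.mpr ?_
    rintro x ⟨hxs, _⟩ ⟨hxt, _⟩
    exact hst (ULift.ext _ _ (hxs ▸ hxt ▸ rfl))
  · intro s t hst
    simp only [Function.onFun]
    split_ifs with h1 h2
    · obtain ⟨x₁, hx₁, _⟩ := h1
      obtain ⟨x₂, hx₂, _⟩ := h2
      refine Set.disjoint_left.mpr ?_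
      intro y hys hyt
      have hys' : y ∈ S x₁ := by rw [hx₁]; exact hys
      have hyt' : y ∈ S x₂ := by rw [hx₂]; exact hyt
      have : S x₁ = S x₂ := key x₁ x₂ y hys' hyt'
      exact hst (ULift.ext _ _ (by rw [← hx₁, ← hx₂, this]))
    all_goals simp
  · ext ⟨x, y⟩
    simp only [Set.mem_iUnion, Set.mem_prod, Set.mem_setOf_eq]
    constructor
    · intro h
      refine ⟨ULift.up (S x), ⟨rfl, ⟨y, h⟩⟩, ?_⟩
      rw [if_pos ⟨x, rfl, ⟨y, h⟩⟩]
      exact h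
    · rintro ⟨s, ⟨hxs, hne⟩, hy⟩
      rw [if_pos ⟨x, hxs, hne⟩] at hy
      rw [← hxs] at hy; exact hy
end

section
/- Let G be a group acting on the right on a set Z and V ⊆ Z × G. Suppose that for every z ∈ Z there is a Hilbert space H and a function v_z : G → H such that for all s,t ∈ G, the indicator χ_W(z,s,t) = ⟨v_z(s), v_z(t)⟩, where W = {(z,s,t) : (z·t⁻¹, t s⁻¹) ∈ V}. Then for every (x,t) ∈ V, both (x, e) ∈ V and (x·t, e) ∈ V. -/
open scoped Classical

theorem stmt6 {Z G : Type*} [Group G] (act : Z → G → Z)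
    (hact_one : ∀ z, act z 1 = z)
    (hact_mul : ∀ z s t, act z (s * t) = act (act z s) t)
    (V : Set (Z × G))
    (h : ∀ z : Z, ∃ (H : Type) (_ : NormedAddCommGroup H) (_ : InnerProductSpace ℂ H)
      (v : G → H), ∀ s t : G,
        (if (act z t⁻¹, t * s⁻¹) ∈ V then (1 : ℂ) else 0) = inner ℂ (v s) (v t)) :
    ∀ (x : Z) (t : G), (x, t) ∈ V → (x, (1 : G)) ∈ V ∧ (act x t, (1 : G)) ∈ V := by
  intro x t hxt
  obtain ⟨H, _, _, v, hv⟩ := h (act x t)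
  have key : act (act x t) t⁻¹ = x := by
    rw [← hact_mul, mul_inv_cancel, hact_one]
  have h1t : (1 : ℂ) = inner ℂ (v 1) (v t) := by
    have := hv 1 t
    rw [key] at this
    simpa [hxt] using this
  have hvt : v t ≠ 0 := by
    intro h0
    rw [h0, inner_zero_right] at h1t
    exact one_ne_zero h1t
  have hv1 : v 1 ≠ 0 := by
    intro h0
    rw [h0, inner_zero_left] at h1t
    exact one_ne_zero h1t
  constructor
  · by_contra hn
    have := hv t t
    rw [key] at this
    simp only [mul_inv_cancel] at this
    rw [if_neg hn] at this
    exact hvt (inner_self_eq_zero.mp this.symm)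
  · by_contra hn
    have := hv 1 1
    simp only [inv_one, mul_one, hact_one] at this
    rw [if_neg hn] at this
    exact hv1 (inner_self_eq_zero.mp this.symm)
end

section
/- Let H be a Hilbert space and v : S → H a function on a set S such that the kernel k(s,t) = ⟨v(s), v(t)⟩ takes only values 0 and 1. Then the relation s ∼ t ⟺ k(s,t) = 1, restricted to the set {s : k(s,s) = 1}, is an equivalence relation; consequently there exists a family of pairwise disjoint subsets (X_i)_{i ∈ I} of S with {(s,t) : k(s,t) = 1} = ⋃_{i ∈ I} X_i × X_i. -/
universe u

theorem stmt7 {S : Type u} {H : Type*} [NormedAddCommGroup H] [InnerProductSpace ℂ H]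
    (v : S → H)
    (h01 : ∀ s t : S, (inner ℂ (v s) (v t) : ℂ) = 0 ∨ (inner ℂ (v s) (v t) : ℂ) = 1) :
    (∀ s t : S, (inner ℂ (v s) (v t) : ℂ) = 1 → (inner ℂ (v t) (v s) : ℂ) = 1) ∧
    (∀ s t u : S, (inner ℂ (v s) (v t) : ℂ) = 1 → (inner ℂ (v t) (v u) : ℂ) = 1 →
      (inner ℂ (v s) (v u) : ℂ) = 1) ∧
    ∃ (I : Type u) (X : I → Set S), Pairwise (Function.onFun Disjoint X) ∧
      {p : S × S | (inner ℂ (v p.1) (v p.2) : ℂ) = 1} = ⋃ i, X i ×ˢ X i := by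
  -- diagonal values
  have hdiag : ∀ s t : S, (inner ℂ (v s) (v t) : ℂ) = 1 → (inner ℂ (v s) (v s) : ℂ) = 1 := by
    intro s t hst
    rcases h01 s s with h | h
    · exfalso
      have : v s = 0 := inner_self_eq_zero.mp h
      rw [this, inner_zero_left] at hst
      exact one_ne_zero hst.symm
    · exact h
  have hdiag' : ∀ s t : S, (inner ℂ (v s) (v t) : ℂ) = 1 → (inner ℂ (v t) (v t) : ℂ) = 1 := by
    intro s t hst
    rcases h01 t t with h | h
    · exfalso
      have : v t = 0 := inner_self_eq_zero.mp h
      rw [this, inner_zero_right] at hst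
      exact one_ne_zero hst.symm
    · exact h
  -- key: inner = 1 forces equality
  have key : ∀ s t : S, (inner ℂ (v s) (v t) : ℂ) = 1 → v s = v t := by
    intro s t hst
    have hss := hdiag s t hst
    have htt := hdiag' s t hst
    have hts : (inner ℂ (v t) (v s) : ℂ) = 1 := by
      rw [← inner_conj_symm, hst]; simp
    rw [← sub_eq_zero, ← @inner_self_eq_zero ℂ, inner_sub_sub_self, hss, htt, hst, hts]
    ring
  have sym : ∀ s t : S, (inner ℂ (v s) (v t) : ℂ) = 1 → (inner ℂ (v t) (v s) : ℂ) = 1 := by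
    intro s t hst
    rw [← inner_conj_symm, hst]; simp
  refine ⟨sym, ?_, ?_⟩
  · intro s t u hst htu
    rw [key s t hst]; exact htu
  · refine ⟨Quot (fun s t : S => v s = v t),
      fun q => {t | (inner ℂ (v t) (v t) : ℂ) = 1 ∧ Quot.mk _ t = q}, ?_, ?_⟩
    · intro q q' hne
      simp only [Function.onFun, Set.disjoint_left]
      rintro t ⟨_, ht⟩ ⟨_, ht'⟩
      exact hne (ht ▸ ht')
    · ext ⟨s, t⟩
      simp only [Set.mem_setOf_eq, Set.mem_iUnion, Set.mem_prod]
      constructor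
      · intro hst
        refine ⟨Quot.mk _ s, ⟨hdiag s t hst, rfl⟩, ⟨hdiag' s t hst, ?_⟩⟩
        exact Quot.sound (r := fun s t : S => v s = v t) (key s t hst).symm
      · rintro ⟨q, ⟨hs, hqs⟩, ⟨ht, hqt⟩⟩
        have hvst : v s = v t := by
          have : Quot.mk (fun s t : S => v s = v t) s = Quot.mk _ t := hqs.trans hqt.symm
          have hlift := congrArg (Quot.lift v (fun a b h => h)) this
          simpa using hlift
        rw [hvst]; exact ht
end

section
/- Let G = ℝ × ℤ/2ℤ, identified with its Pontryagin dual Γ ≅ G. Define H = {(a,0,b,0) : a,b ∈ ℝ} ∪ {(c,1,d,1) : c,d ∈ ℝ} ⊆ G × Γ = ℝ × ℤ/2ℤ × ℝ × ℤ/2ℤ. Then H is an open subgroup of G × Γ, but H is not of the form A × B for any subgroups A ≤ G and B ≤ Γ. -/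
instance : TopologicalSpace (ZMod 2) := ⊥

instance : DiscreteTopology (ZMod 2) := ⟨rfl⟩

/-- The subset `H = {(a,0,b,0)} ∪ {(c,1,d,1)}` of `G × Γ = (ℝ × ℤ/2) × (ℝ × ℤ/2)`. -/
def diagH : Set ((ℝ × ZMod 2) × (ℝ × ZMod 2)) :=
  {p | (∃ a b : ℝ, p = ((a, 0), (b, 0))) ∨ (∃ c d : ℝ, p = ((c, 1), (d, 1)))}

lemma diagH_eq : diagH = {p | p.1.2 = p.2.2} := by
  ext ⟨⟨a, ε⟩, ⟨b, δ⟩⟩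
  constructor
  · rintro (⟨a, b, h⟩ | ⟨c, d, h⟩) <;> simp_all
  · intro h
    simp only [Set.mem_setOf_eq] at h ⊢
    subst h
    fin_cases ε
    · left; exact ⟨a, b, rfl⟩
    · right; exact ⟨a, b, rfl⟩

def diagS : AddSubgroup ((ℝ × ZMod 2) × (ℝ × ZMod 2)) where
  carrier := {p | p.1.2 = p.2.2}
  add_mem' := by
    intro a b ha hb
    simp only [Set.mem_setOf_eq] at *
    simp [Prod.snd_add, ha, hb]
  zero_mem' := rfl
  neg_mem' := by
    intro a ha
    simp only [Set.mem_setOf_eq] at *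
    simp [ha]

theorem stmt15 :
    IsOpen diagH ∧
    (∃ S : AddSubgroup ((ℝ × ZMod 2) × (ℝ × ZMod 2)), (S : Set _) = diagH) ∧
    ¬ ∃ (A B : AddSubgroup (ℝ × ZMod 2)),
        diagH = (A : Set (ℝ × ZMod 2)) ×ˢ (B : Set (ℝ × ZMod 2)) := by
  refine ⟨?_, ?_, ?_⟩
  · rw [diagH_eq]
    have hc : Continuous fun p : (ℝ × ZMod 2) × (ℝ × ZMod 2) => (p.1.2, p.2.2) := by
      fun_prop
    have : {p : (ℝ × ZMod 2) × (ℝ × ZMod 2) | p.1.2 = p.2.2}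
        = (fun p : (ℝ × ZMod 2) × (ℝ × ZMod 2) => (p.1.2, p.2.2)) ⁻¹'
          {q : ZMod 2 × ZMod 2 | q.1 = q.2} := rfl
    rw [this]
    exact (isOpen_discrete _).preimage hc
  · exact ⟨diagS, diagH_eq.symm⟩
  · rintro ⟨A, B, h⟩
    have h1 : ((0, 1), (0, 1)) ∈ diagH := Or.inr ⟨0, 0, rfl⟩
    have h0 : (((0 : ℝ), (0 : ZMod 2)), ((0 : ℝ), (0 : ZMod 2))) ∈ diagH := Or.inl ⟨0, 0, rfl⟩
    rw [h] at h1 h0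
    have hbad : (((0 : ℝ), (1 : ZMod 2)), ((0 : ℝ), (0 : ZMod 2))) ∈
        (A : Set (ℝ × ZMod 2)) ×ˢ (B : Set (ℝ × ZMod 2)) := ⟨h1.1, h0.2⟩
    rw [← h] at hbad
    rcases hbad with ⟨a, b, hab⟩ | ⟨c, d, hcd⟩
    · have : (1 : ZMod 2) = 0 := congrArg (fun p => p.1.2) hab
      exact one_ne_zero this
    · have : (0 : ZMod 2) = 1 := congrArg (fun p => p.2.2) hcd
      exact zero_ne_one this
end
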